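/- For any prime p, positive integer a, and positive integer n divisible by p, the congruence (-x)^{n+1}·∑_{k=1}^{p^a-1} B_k(x)/(-n-1)^k ≡ -∑_{r=1}^{a} x^{p^r}·∑_{k=0}^{n} (n!/k!)·(-x)^k (mod p·Z_p[x]) holds, noting that n!/k! ≡ 0 (mod p) for all 0 ≤ k ≤ n-1 and -n-1 ≡ -1 (mod p). -/

import Mathlib

/-- Stirling numbers of the second kind. -/
def stirling2 : ℕ → ℕ → ℕ
  | 0, 0 => 1
  | 0, _ + 1 => 0
  | _ + 1, 0 => 0
  | n + 1, k + 1 => (k + 1) * stirling2 n (k + 1) + stirling2 n k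

/-- The Bell polynomial `B_n(x) = ∑_{k=0}^n S(n,k) x^k`. -/
noncomputable def bellPoly (R : Type*) [CommRing R] (n : ℕ) : Polynomial R :=
  ∑ k ∈ Finset.range (n + 1), Polynomial.C (stirling2 n k : R) * Polynomial.X ^ k

lemma stirling2_zero_succ (k : ℕ) : stirling2 0 (k+1) = 0 := rfl
lemma stirling2_succ_zero (n : ℕ) : stirling2 (n+1) 0 = 0 := rfl
lemma stirling2_succ_succ (n k : ℕ) :
    stirling2 (n+1) (k+1) = (k + 1) * stirling2 n (k + 1) + stirling2 n k := rfl

lemma stirling2_eq_zero_of_lt : ∀ {n k : ℕ}, n < k → stirling2 n k = 0 := by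
  intro n
  induction n with
  | zero => intro k hk; obtain ⟨m, rfl⟩ := Nat.exists_eq_add_of_lt hk; rfl
  | succ n ih =>
    intro k hk
    obtain ⟨k, rfl⟩ : ∃ m, k = m + 1 := ⟨k - 1, by omega⟩
    rw [stirling2_succ_succ, ih (by omega), ih (by omega)]; ring

lemma stirling2_self (n : ℕ) : stirling2 n n = 1 := by
  induction n with
  | zero => rfl
  | succ n ih =>
    rw [stirling2_succ_succ, stirling2_eq_zero_of_lt (by omega), ih]; ring

lemma choose_mul_sub (k j : ℕ) : ((k+1).choose j * (k+1-j) : ℕ) = (k+1) * k.choose j := by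
  have h1 := Nat.add_one_mul_choose_eq k j
  have h2 := Nat.choose_succ_right_eq (k+1) j
  omega

open Finset in
lemma stirling2_factorial_formula : ∀ (n k : ℕ), (k.factorial : ℤ) * stirling2 n k =
    ∑ j ∈ Finset.range (k+1), (-1)^j * (k.choose j) * ((k - j : ℕ) : ℤ)^n := by
  intro n
  induction n with
  | zero =>
    intro k
    rcases k with _ | m
    · simp [stirling2]
    · rw [stirling2_zero_succ]
      simp only [pow_zero, mul_one, Nat.cast_zero, mul_zero]
      have := Int.alternating_sum_range_choose (n := m+1)
      rw [if_neg (by omega)] at this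
      rw [← this]
  | succ n ih =>
    intro k
    rcases k with _ | k
    · simp [stirling2]
    · -- step
      set A : ℤ := ∑ j ∈ Finset.range (k+1), (-1)^j * (k.choose j) * ((k + 1 - j : ℕ) : ℤ)^n with hAdef
      have step1 : ∑ j ∈ Finset.range (k+2), (-1:ℤ)^j * ((k+1).choose j) * ((k + 1 - j : ℕ) : ℤ)^(n+1)
          = (k+1) * A := by
        rw [hAdef, Finset.mul_sum]
        rw [Finset.sum_range_succ]
        have hlast : (-1:ℤ)^(k+1) * ((k+1).choose (k+1)) * ((k + 1 - (k+1) : ℕ) : ℤ)^(n+1) = 0 := by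
          simp
        rw [hlast, add_zero]
        refine Finset.sum_congr rfl fun j hj => ?_
        have hc : (((k+1).choose j : ℤ) * ((k+1-j : ℕ) : ℤ)) = (k+1) * (k.choose j : ℤ) := by
          exact_mod_cast choose_mul_sub k j
        have : ((k + 1 - j : ℕ) : ℤ)^(n+1) = ((k+1-j : ℕ) : ℤ)^n * ((k+1-j:ℕ) : ℤ) := by ring
        rw [this]
        calc (-1:ℤ)^j * ((k+1).choose j) * (((k + 1 - j:ℕ):ℤ)^n * ((k+1-j:ℕ):ℤ))
            = (-1)^j * ((k + 1 - j:ℕ):ℤ)^n * (((k+1).choose j : ℤ) * ((k+1-j:ℕ):ℤ)) := by ring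
          _ = (-1)^j * ((k + 1 - j:ℕ):ℤ)^n * ((k+1) * (k.choose j : ℤ)) := by rw [hc]
          _ = (k+1) * ((-1)^j * (k.choose j) * ((k + 1 - j:ℕ):ℤ)^n) := by ring
      have step2 : (∑ j ∈ Finset.range (k+2), (-1:ℤ)^j * ((k+1).choose j) * ((k + 1 - j : ℕ) : ℤ)^n)
          + ∑ j ∈ Finset.range (k+1), (-1:ℤ)^j * (k.choose j) * ((k - j : ℕ) : ℤ)^n = A := by
        rw [Finset.sum_range_succ' (fun j => (-1:ℤ)^j * ((k+1).choose j) * ((k + 1 - j : ℕ) : ℤ)^n) (k+1)]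
        rw [hAdef, Finset.sum_range_succ' (fun j => (-1:ℤ)^j * (k.choose j) * ((k + 1 - j : ℕ) : ℤ)^n) k]
        have hz : ∀ i ∈ Finset.range (k+1),
            (-1:ℤ)^(i+1) * ((k+1).choose (i+1)) * ((k + 1 - (i+1) : ℕ) : ℤ)^n
            = (-1:ℤ)^(i+1) * (k.choose (i+1)) * ((k - i : ℕ) : ℤ)^n
              + (-1:ℤ)^(i+1) * (k.choose i) * ((k - i : ℕ) : ℤ)^n := by
          intro i hi
          have : (k+1).choose (i+1) = k.choose i + k.choose (i+1) := Nat.choose_succ_succ k i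
          rw [this]
          have he : (k + 1 - (i+1)) = k - i := by omega
          rw [he]
          push_cast
          ring
        rw [Finset.sum_congr rfl hz, Finset.sum_add_distrib]
        have hzero : ∑ i ∈ Finset.range (k+1), (-1:ℤ)^(i+1) * (k.choose (i+1)) * ((k - i : ℕ) : ℤ)^n
            = ∑ i ∈ Finset.range k, (-1:ℤ)^(i+1) * (k.choose (i+1)) * ((k - i : ℕ) : ℤ)^n := by
          rw [Finset.sum_range_succ]
          simp
        have hneg : ∑ i ∈ Finset.range (k+1), (-1:ℤ)^(i+1) * (k.choose i) * ((k - i : ℕ) : ℤ)^n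
            = - ∑ i ∈ Finset.range (k+1), (-1:ℤ)^i * (k.choose i) * ((k - i : ℕ) : ℤ)^n := by
          rw [← Finset.sum_neg_distrib]
          exact Finset.sum_congr rfl fun i hi => by ring
        rw [hzero, hneg]
        simp only [Nat.add_sub_add_right, Nat.choose_zero_right, Nat.cast_one, Nat.sub_zero]
        ring
      have ih' : ((k:ℤ)+1) * (k.factorial : ℤ) * (stirling2 n (k+1) : ℤ)
          = ∑ j ∈ Finset.range (k+2), (-1:ℤ)^j * ((k+1).choose j) * ((k + 1 - j : ℕ) : ℤ)^n := by
        have h := ih (k+1)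
        rw [Nat.factorial_succ] at h
        push_cast at h ⊢
        linear_combination h
      rw [stirling2_succ_succ, Nat.factorial_succ]
      push_cast
      linear_combination ((k:ℤ)+1)*ih' + ((k:ℤ)+1)*(ih k) - step1 + ((k:ℤ)+1)*step2

open Polynomial

section BellBasic
variable {R : Type*} [CommRing R]

lemma bellPoly_zero : bellPoly R 0 = 1 := by
  simp [bellPoly, stirling2_self]

lemma bellPoly_one : bellPoly R 1 = X := by
  rw [bellPoly]
  rw [Finset.sum_range_succ, Finset.sum_range_one]
  norm_num [stirling2_self, stirling2_succ_zero]

lemma bellPoly_succ (n : ℕ) :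
    bellPoly R (n + 1) = X * (bellPoly R n + derivative (bellPoly R n)) := by
  have hXd : ∀ k : ℕ, X * derivative (X ^ k : R[X]) = C (k : R) * X ^ k := by
    intro k
    rcases k with _ | k
    · simp
    · rw [derivative_X_pow]
      simp only [Nat.add_sub_cancel]
      push_cast
      ring
  have hRHS : X * (bellPoly R n + derivative (bellPoly R n))
      = (∑ k ∈ Finset.range (n+1), C (stirling2 n k : R) * X ^ (k+1))
        + ∑ k ∈ Finset.range (n+1), C ((k : R) * stirling2 n k) * X ^ k := by
    rw [bellPoly, derivative_sum, mul_add, Finset.mul_sum, Finset.mul_sum]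
    congr 1
    · exact Finset.sum_congr rfl fun k hk => by ring
    · refine Finset.sum_congr rfl fun k hk => ?_
      rw [derivative_C_mul]
      calc X * (C (stirling2 n k : R) * derivative (X ^ k))
          = C (stirling2 n k : R) * (X * derivative (X ^ k)) := by ring
        _ = C (stirling2 n k : R) * (C (k : R) * X ^ k) := by rw [hXd]
        _ = C ((k : R) * stirling2 n k) * X ^ k := by rw [map_mul]; ring
  rw [hRHS, bellPoly]
  rw [Finset.sum_range_succ' (fun k => C (stirling2 (n+1) k : R) * X ^ k) (n+1)]
  have h0 : C (stirling2 (n+1) 0 : R) * X ^ 0 = 0 := by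
    rw [stirling2_succ_zero]; simp
  rw [h0, add_zero]
  have hsplit : ∀ i ∈ Finset.range (n+1),
      C (stirling2 (n+1) (i+1) : R) * X ^ (i+1)
      = C (((i:R)+1) * stirling2 n (i+1)) * X ^ (i+1) + C (stirling2 n i : R) * X ^ (i+1) := by
    intro i hi
    rw [stirling2_succ_succ]
    push_cast
    rw [map_add, map_mul]
    ring
  rw [Finset.sum_congr rfl hsplit, Finset.sum_add_distrib]
  rw [add_comm]
  congr 1
  -- ∑_{i∈range(n+1)} C((i+1) s n (i+1)) X^{i+1} = ∑_{k∈range(n+1)} C(k * s n k) X^k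
  rw [Finset.sum_range_succ' (fun k => C ((k : R) * stirling2 n k) * X ^ k) n]
  simp only [Nat.cast_zero, zero_mul, map_zero, add_zero]
  rw [Finset.sum_range_succ]
  have hztop : C (((n:R)+1) * stirling2 n (n+1)) * X ^ (n+1) = 0 := by
    rw [stirling2_eq_zero_of_lt (by omega)]; simp
  rw [hztop, add_zero]
  refine Finset.sum_congr rfl fun i hi => ?_
  push_cast
  ring

end BellBasic

section CharPSection
variable (p : ℕ) [hp : Fact p.Prime]

lemma stirling2_p_cast (k : ℕ) (hk : k < p) :
    (stirling2 p k : ZMod p) = (stirling2 1 k : ZMod p) := by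
  have h1 := stirling2_factorial_formula p k
  have h2 := stirling2_factorial_formula 1 k
  have c1 : (k.factorial : ZMod p) * (stirling2 p k : ZMod p)
      = ∑ j ∈ Finset.range (k+1), (-1:ZMod p)^j * (k.choose j) * ((k - j : ℕ) : ZMod p)^p := by
    have := congrArg (fun z : ℤ => (z : ZMod p)) h1
    push_cast at this
    exact this
  have c2 : (k.factorial : ZMod p) * (stirling2 1 k : ZMod p)
      = ∑ j ∈ Finset.range (k+1), (-1:ZMod p)^j * (k.choose j) * ((k - j : ℕ) : ZMod p)^1 := by
    have := congrArg (fun z : ℤ => (z : ZMod p)) h2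
    push_cast at this
    exact this
  have hsums : (∑ j ∈ Finset.range (k+1), (-1:ZMod p)^j * (k.choose j) * ((k - j : ℕ) : ZMod p)^p)
      = ∑ j ∈ Finset.range (k+1), (-1:ZMod p)^j * (k.choose j) * ((k - j : ℕ) : ZMod p)^1 := by
    refine Finset.sum_congr rfl fun j hj => ?_
    rw [ZMod.pow_card, pow_one]
  have hkfac : (k.factorial : ZMod p) ≠ 0 := by
    rw [Ne, CharP.cast_eq_zero_iff (ZMod p) p]
    rw [Nat.Prime.dvd_factorial hp.out]
    omega
  apply mul_left_cancel₀ hkfac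
  rw [c1, c2, hsums]

lemma bellPoly_p : bellPoly (ZMod p) p = X + X ^ p := by
  have hp2 : 2 ≤ p := hp.out.two_le
  rw [bellPoly]
  have hfun : ∀ k ∈ Finset.range (p+1),
      C (stirling2 p k : ZMod p) * X ^ k
      = (if k = 1 then (X : (ZMod p)[X]) else 0) + (if k = p then X ^ p else 0) := by
    intro k hk
    rw [Finset.mem_range] at hk
    rcases eq_or_ne k 1 with rfl | hk1
    · rw [if_pos rfl, if_neg (by omega)]
      rw [stirling2_p_cast p 1 (by omega), stirling2_self]
      simp
    rcases eq_or_ne k p with rfl | hkp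
    · rw [if_neg hk1, if_pos rfl, stirling2_self]
      simp
    · rw [if_neg hk1, if_neg hkp, add_zero]
      rcases Nat.eq_zero_or_pos k with rfl | hk0
      · obtain ⟨m, rfl⟩ : ∃ m, p = m + 1 := ⟨p - 1, by omega⟩
        rw [stirling2_succ_zero]
        simp
      · have hklt : k < p := by omega
        rw [stirling2_p_cast p k hklt, stirling2_eq_zero_of_lt (by omega)]
        simp
  rw [Finset.sum_congr rfl hfun, Finset.sum_add_distrib]
  rw [Finset.sum_ite_eq' (Finset.range (p+1)) 1 (fun _ => (X : (ZMod p)[X]))]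
  rw [Finset.sum_ite_eq' (Finset.range (p+1)) p (fun _ => (X : (ZMod p)[X]) ^ p)]
  rw [if_pos (by simp [Finset.mem_range]; omega), if_pos (by simp [Finset.mem_range])]

end CharPSection

section OperatorSection
variable (p : ℕ) [hp : Fact p.Prime]

local notation "F" => ZMod p

/-- The operator `f ↦ X(f + f')` as an `F`-linear endomorphism. -/
noncomputable def Lop : Module.End F (Polynomial F) where
  toFun f := X * (f + derivative f)
  map_add' f g := by
    show X * ((f + g) + derivative (f + g)) = X * (f + derivative f) + X * (g + derivative g)
    rw [derivative_add]; ring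
  map_smul' c f := by
    show X * (c • f + derivative (c • f)) = c • (X * (f + derivative f))
    rw [derivative_smul, ← smul_add, mul_smul_comm]

lemma Lop_apply (f : Polynomial F) : Lop p f = X * (f + derivative f) := rfl

lemma bellPoly_succ_Lop (n : ℕ) : bellPoly F (n + 1) = Lop p (bellPoly F n) :=
  bellPoly_succ n

lemma Lop_pow_bell (j k : ℕ) : (Lop p ^ j) (bellPoly F k) = bellPoly F (k + j) := by
  induction j generalizing k with
  | zero => simp
  | succ j ih =>
    rw [pow_succ', Module.End.mul_apply, ih, ← bellPoly_succ_Lop,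
      show k + j + 1 = k + (j + 1) by omega]

lemma Lop_commute_mulLeft (w : Polynomial F) (hw : derivative w = 0) :
    Commute (Lop p) (LinearMap.mulLeft F w) := by
  apply LinearMap.ext
  intro f
  simp only [Module.End.mul_apply, LinearMap.mulLeft_apply, Lop_apply, derivative_mul, hw]
  ring

instance : CharP (Module.End F (Polynomial F)) p :=
  charP_of_injective_algebraMap (algebraMap F (Module.End F (Polynomial F))).injective p

lemma touchard (k : ℕ) :
    bellPoly F (k + p) = bellPoly F (k + 1) + X ^ p * bellPoly F k := by
  induction k with
  | zero =>
    rw [zero_add, zero_add, bellPoly_p, bellPoly_one, bellPoly_zero, mul_one]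
  | succ k ih =>
    have h1 : k + 1 + p = (k + p) + 1 := by omega
    rw [h1, bellPoly_succ_Lop, ih, map_add]
    have hw : derivative (X ^ p : Polynomial F) = 0 := by
      rw [derivative_X_pow]
      have : ((p : F)) = 0 := CharP.cast_eq_zero F p
      rw [this]
      simp
    have hcomm := Lop_commute_mulLeft p (X ^ p) hw
    have : Lop p (X ^ p * bellPoly F k) = X ^ p * Lop p (bellPoly F k) := by
      have := congrArg (fun (φ : Module.End F (Polynomial F)) => φ (bellPoly F k)) hcomm.eq
      simp only [Module.End.mul_apply, LinearMap.mulLeft_apply] at this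
      exact this
    rw [this, ← bellPoly_succ_Lop, ← bellPoly_succ_Lop]

/-- `W a = ∑_{r=0}^{a-1} X^{p^{r+1}}`. -/
noncomputable def Wpoly (a : ℕ) : Polynomial F :=
  ∑ r ∈ Finset.range a, X ^ (p ^ (r + 1))

lemma Wpoly_derivative (a : ℕ) : derivative (Wpoly p a) = 0 := by
  rw [Wpoly, derivative_sum]
  refine Finset.sum_eq_zero fun r hr => ?_
  rw [derivative_X_pow]
  have h1 : ((p ^ (r+1) : ℕ) : F) = 0 := by
    rw [CharP.cast_eq_zero_iff F p]
    exact dvd_pow_self p (by omega)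
  rw [h1]
  simp

lemma Wpoly_succ (a : ℕ) : Wpoly p (a + 1) = X ^ p + (Wpoly p a) ^ p := by
  rw [Wpoly, Wpoly, sum_pow_char]
  rw [Finset.sum_range_succ' (fun r => (X : Polynomial F) ^ (p ^ (r + 1))) a]
  rw [pow_one, add_comm]
  congr 1
  refine Finset.sum_congr rfl fun r hr => ?_
  rw [← pow_mul, ← pow_succ]

lemma bell_pow_shift : ∀ a, 1 ≤ a → ∀ k : ℕ,
    bellPoly F (k + p ^ a) = bellPoly F (k + 1) + Wpoly p a * bellPoly F k := by
  intro a
  induction a with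
  | zero => omega
  | succ a ih =>
    intro _ k
    rcases Nat.eq_zero_or_pos a with rfl | ha
    · -- a + 1 = 1
      rw [pow_one, touchard]
      congr 1
      rw [Wpoly, Finset.sum_range_one, pow_one]
    · -- inductive step
      set E : Module.End F (Polynomial F) := Lop p + LinearMap.mulLeft F (Wpoly p a) with hE
      have hEapp : ∀ m, E (bellPoly F m) = bellPoly F (m + p ^ a) := by
        intro m
        rw [hE, LinearMap.add_apply, LinearMap.mulLeft_apply, ← bellPoly_succ_Lop,
          ih ha m]
      have hEj : ∀ j m, (E ^ j) (bellPoly F m) = bellPoly F (m + j * p ^ a) := by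
        intro j
        induction j with
        | zero => intro m; simp
        | succ j ihj =>
          intro m
          rw [pow_succ', Module.End.mul_apply, ihj, hEapp]
          congr 1
          ring
      have hEp : E ^ p = Lop p ^ p + LinearMap.mulLeft F ((Wpoly p a) ^ p) := by
        rw [hE, add_pow_char_of_commute _ (Lop_commute_mulLeft p _ (Wpoly_derivative p a)),
          LinearMap.pow_mulLeft]
      have key := hEj p k
      rw [hEp, LinearMap.add_apply, LinearMap.mulLeft_apply, Lop_pow_bell, touchard] at key
      have hkexp : k + p ^ (a + 1) = k + p * p ^ a := by ring_nf
      rw [hkexp, ← key, Wpoly_succ]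
      ring

end OperatorSection

section ODESection
variable (p : ℕ) [hp : Fact p.Prime]

local notation "F" => ZMod p

/-- The operator `Φ f = X f' + (X+1) f`. -/
noncomputable def Phif (f : Polynomial F) : Polynomial F :=
  X * derivative f + (X + 1) * f

lemma Phif_add (f g : Polynomial F) : Phif p (f + g) = Phif p f + Phif p g := by
  rw [Phif, Phif, Phif, derivative_add]; ring

lemma Phif_const_mul (c f : Polynomial F) (hc : derivative c = 0) :
    Phif p (c * f) = c * Phif p f := by
  rw [Phif, Phif, derivative_mul, hc]; ring

lemma Phif_bell (m : ℕ) :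
    Phif p (bellPoly F m) = bellPoly F (m + 1) + bellPoly F m := by
  rw [Phif, bellPoly_succ]; ring

noncomputable def Gb (m : ℕ) : Polynomial F :=
  ∑ k ∈ Finset.range m, (-1 : Polynomial F) ^ k * bellPoly F k

lemma derivative_neg_one_pow (m : ℕ) : derivative ((-1 : Polynomial F) ^ m) = 0 := by
  have h : ((-1 : Polynomial F)) ^ m = C ((-1 : F) ^ m) := by
    rw [map_pow, map_neg, map_one]
  rw [h, derivative_C]

lemma Phif_Gb (m : ℕ) :
    Phif p (Gb p m) = 1 - (-1 : Polynomial F) ^ m * bellPoly F m := by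
  induction m with
  | zero =>
    rw [Gb, Finset.sum_range_zero, Phif, derivative_zero, bellPoly_zero]
    ring
  | succ m ih =>
    have hs : Gb p (m+1) = Gb p m + (-1 : Polynomial F)^m * bellPoly F m := by
      rw [Gb, Gb, Finset.sum_range_succ]
    rw [hs, Phif_add, ih, Phif_const_mul p _ _ (derivative_neg_one_pow p m), Phif_bell,
      pow_succ]
    ring

lemma Phif_inj (f g : Polynomial F) (h : Phif p f = Phif p g) : f = g := by
  by_contra hne
  set d : Polynomial F := f - g with hd
  have hdne : d ≠ 0 := sub_ne_zero.mpr hne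
  have hPhid : Phif p d = 0 := by
    rw [Phif, hd, derivative_sub]
    rw [Phif, Phif] at h
    ring_nf
    ring_nf at h
    linear_combination h
  have hco : (Phif p d).coeff (d.natDegree + 1) = d.leadingCoeff := by
    rw [Phif]
    rw [coeff_add]
    have h1 : (X * derivative d).coeff (d.natDegree + 1) = 0 := by
      rw [coeff_X_mul, coeff_derivative, coeff_natDegree_succ_eq_zero]
      ring
    have h2 : ((X + 1) * d).coeff (d.natDegree + 1) = d.leadingCoeff := by
      rw [add_mul, one_mul, coeff_add, coeff_X_mul, coeff_natDegree_succ_eq_zero,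
        add_zero, leadingCoeff]
    rw [h1, h2, zero_add]
  rw [hPhid, coeff_zero] at hco
  exact hdne (leadingCoeff_eq_zero.mp hco.symm)

noncomputable def Tpoly (a : ℕ) : Polynomial F :=
  ∑ r ∈ Finset.range a, X ^ (p ^ (r + 1) - 1)

lemma Phif_pow_term (r : ℕ) :
    Phif p ((X : Polynomial F) ^ (p ^ (r + 1) - 1)) = X ^ (p ^ (r + 1)) := by
  have hm : 1 ≤ p ^ (r+1) - 1 := by
    have := hp.out.two_le
    have h2 : p ≤ p ^ (r+1) := Nat.le_self_pow (by omega) p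
    omega
  set m : ℕ := p ^ (r+1) - 1 with hmdef
  have hm1 : m + 1 = p ^ (r+1) := by
    have h2 : 1 ≤ p ^ (r+1) := Nat.one_le_pow _ _ hp.out.pos
    omega
  rw [Phif, derivative_X_pow]
  have hXd : X * (C (m : F) * X ^ (m - 1)) = C (m : F) * X ^ m := by
    rw [mul_comm (X : Polynomial F), mul_assoc, ← pow_succ, show m - 1 + 1 = m by omega]
  rw [hXd]
  have hcast : (m : F) = -1 := by
    have h0 : ((m + 1 : ℕ) : F) = 0 := by
      rw [hm1, CharP.cast_eq_zero_iff F p]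
      exact dvd_pow_self p (by omega)
    push_cast at h0
    linear_combination h0
  rw [hcast, map_neg, map_one, ← hm1]
  ring

lemma Phif_T (a : ℕ) : Phif p (1 + Tpoly p a) = 1 + X + Wpoly p a := by
  induction a with
  | zero =>
    rw [Tpoly, Wpoly, Finset.sum_range_zero, Finset.sum_range_zero, add_zero, add_zero,
      Phif, derivative_one]
    ring
  | succ a ih =>
    have h1 : (1 : Polynomial F) + Tpoly p (a+1)
        = (1 + Tpoly p a) + X ^ (p ^ (a + 1) - 1) := by
      rw [Tpoly, Tpoly, Finset.sum_range_succ]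
      ring
    rw [h1, Phif_add, ih, Phif_pow_term,
      show Wpoly p (a+1) = Wpoly p a + X ^ (p ^ (a+1)) from by
        rw [Wpoly, Wpoly, Finset.sum_range_succ]]
    ring

lemma Gb_eq (a : ℕ) (ha : 1 ≤ a) : Gb p (p ^ a) = 1 + Tpoly p a := by
  apply Phif_inj
  rw [Phif_Gb, Phif_T]
  have hB : bellPoly F (p ^ a) = X + Wpoly p a := by
    have h := bell_pow_shift p a ha 0
    rw [zero_add, zero_add, bellPoly_one, bellPoly_zero, mul_one] at h
    exact h
  have hneg : ((-1 : Polynomial F)) ^ (p ^ a) = -1 := neg_one_pow_char_pow (Polynomial F) p a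
  rw [hB, hneg]
  ring

lemma key_sum (a : ℕ) (ha : 1 ≤ a) :
    ∑ k ∈ Finset.Icc 1 (p ^ a - 1), (-1 : Polynomial F) ^ k * bellPoly F k
      = Tpoly p a := by
  have hpa : 0 < p ^ a := Nat.pow_pos hp.out.pos
  have h1 : Gb p (p ^ a) = 1 + ∑ k ∈ Finset.Icc 1 (p ^ a - 1), (-1 : Polynomial F) ^ k * bellPoly F k := by
    rw [Gb, Finset.range_eq_Ico, Finset.sum_eq_sum_Ico_succ_bot hpa]
    rw [show Finset.Ico 1 (p ^ a) = Finset.Icc 1 (p ^ a - 1) by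
      rw [← Finset.Ico_add_one_right_eq_Icc]; congr 1; omega]
    rw [pow_zero, one_mul, bellPoly_zero]
  have h2 := Gb_eq p a ha
  rw [h1] at h2
  exact add_left_cancel h2

end ODESection

section Glue
variable (p : ℕ) [hp : Fact p.Prime]

lemma sum_Icc_one_eq_sum_range {M : Type*} [AddCommMonoid M] (f : ℕ → M) (a : ℕ) :
    ∑ r ∈ Finset.Icc 1 a, f r = ∑ r ∈ Finset.range a, f (r + 1) := by
  induction a with
  | zero => simp
  | succ a ih =>
    rw [Finset.sum_Icc_succ_top (by omega), ih, Finset.sum_range_succ]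

lemma dvd_of_map_eq_zero (f : Polynomial ℤ_[p])
    (h : f.map (PadicInt.toZMod : ℤ_[p] →+* ZMod p) = 0) :
    (p : Polynomial ℤ_[p]) ∣ f := by
  have hC : (p : Polynomial ℤ_[p]) = Polynomial.C (p : ℤ_[p]) := by
    rw [map_natCast]
  rw [hC, Polynomial.C_dvd_iff_dvd_coeff]
  intro i
  have hcoeff : PadicInt.toZMod (f.coeff i) = 0 := by
    have := congrArg (fun g => Polynomial.coeff g i) h
    simpa [Polynomial.coeff_map] using this
  have hker : f.coeff i ∈ RingHom.ker (PadicInt.toZMod : ℤ_[p] →+* ZMod p) := hcoeff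
  rw [PadicInt.ker_toZMod, PadicInt.maximalIdeal_eq_span_p, Ideal.mem_span_singleton] at hker
  exact hker

lemma toZMod_of_unit_eq (u : ℤ_[p]) (hu : PadicInt.toZMod u = -1) (k : ℕ) :
    PadicInt.toZMod (Ring.inverse (u ^ k)) = (-1 : ZMod p) ^ k := by
  have hunit : IsUnit u := by
    by_contra hnu
    have h1 : u ∈ RingHom.ker (PadicInt.toZMod : ℤ_[p] →+* ZMod p) := by
      rw [PadicInt.ker_toZMod]
      exact (IsLocalRing.mem_maximalIdeal u).mpr hnu
    have h2 : PadicInt.toZMod u = 0 := h1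
    rw [hu] at h2
    have : (1 : ZMod p) = 0 := by linear_combination -h2
    exact one_ne_zero this
  have hcancel : Ring.inverse (u ^ k) * u ^ k = 1 :=
    Ring.inverse_mul_cancel _ (hunit.pow k)
  have := congrArg (PadicInt.toZMod : ℤ_[p] →+* ZMod p) hcancel
  rw [map_mul, map_pow, map_one, hu] at this
  have hsq : ((-1 : ZMod p)) ^ k * ((-1 : ZMod p)) ^ k = 1 := by
    rw [← mul_pow]; norm_num
  calc PadicInt.toZMod (Ring.inverse (u ^ k))
      = PadicInt.toZMod (Ring.inverse (u ^ k)) * ((-1 : ZMod p) ^ k * (-1 : ZMod p) ^ k) := by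
        rw [hsq, mul_one]
    _ = (PadicInt.toZMod (Ring.inverse (u ^ k)) * (-1 : ZMod p) ^ k) * (-1 : ZMod p) ^ k := by
        ring
    _ = (-1 : ZMod p) ^ k := by rw [this, one_mul]

lemma map_bellPoly (k : ℕ) :
    (bellPoly ℤ_[p] k).map (PadicInt.toZMod : ℤ_[p] →+* ZMod p) = bellPoly (ZMod p) k := by
  rw [bellPoly, bellPoly, Polynomial.map_sum]
  refine Finset.sum_congr rfl fun j hj => ?_
  rw [Polynomial.map_mul, Polynomial.map_pow, Polynomial.map_X, Polynomial.map_C,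
    map_natCast]

end Glue

open Polynomial in
/-- For a prime `p`, `a ≥ 1`, and `n ≥ 1` with `p ∣ n`,
`(-x)^{n+1}·∑_{k=1}^{p^a-1} B_k(x)/(-n-1)^k ≡ -∑_{r=1}^a x^{p^r}·∑_{k=0}^n (n!/k!)(-x)^k`
mod `p·ℤ_p[x]`. -/
theorem p_dvd_n_case (p : ℕ) [Fact p.Prime] (a n : ℕ) (ha : 0 < a) (hn : 0 < n)
    (hpn : p ∣ n) :
    (p : Polynomial ℤ_[p]) ∣
      (-X) ^ (n + 1) * (∑ k ∈ Finset.Icc 1 (p ^ a - 1),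
          Polynomial.C (Ring.inverse ((-(n : ℤ_[p]) - 1) ^ k)) * bellPoly ℤ_[p] k) -
        (-(∑ r ∈ Finset.Icc 1 a, X ^ (p ^ r) *
            ∑ k ∈ Finset.range (n + 1),
              Polynomial.C ((n.factorial / k.factorial : ℕ) : ℤ_[p]) * (-X) ^ k)) := by
  apply dvd_of_map_eq_zero
  have hu : PadicInt.toZMod (-(n : ℤ_[p]) - 1) = -1 := by
    rw [map_sub, map_neg, map_natCast, map_one]
    have : ((n : ℕ) : ZMod p) = 0 := (CharP.cast_eq_zero_iff (ZMod p) p n).mpr hpn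
    rw [this]
    ring
  have hmap1 : (∑ k ∈ Finset.Icc 1 (p ^ a - 1),
        Polynomial.C (Ring.inverse ((-(n : ℤ_[p]) - 1) ^ k)) * bellPoly ℤ_[p] k).map
        (PadicInt.toZMod : ℤ_[p] →+* ZMod p) = Tpoly p a := by
    rw [Polynomial.map_sum]
    rw [← key_sum p a ha]
    refine Finset.sum_congr rfl fun k hk => ?_
    rw [Polynomial.map_mul, Polynomial.map_C, map_bellPoly,
      toZMod_of_unit_eq p _ hu k]
    congr 1
    rw [map_pow, map_neg, map_one]
  have hmap2 : (∑ k ∈ Finset.range (n + 1),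
        Polynomial.C ((n.factorial / k.factorial : ℕ) : ℤ_[p]) * (-X) ^ k).map
        (PadicInt.toZMod : ℤ_[p] →+* ZMod p) = (-X) ^ n := by
    rw [Polynomial.map_sum]
    have hterm : ∀ k ∈ Finset.range (n+1),
        (Polynomial.C ((n.factorial / k.factorial : ℕ) : ℤ_[p]) * (-X) ^ k).map
          (PadicInt.toZMod : ℤ_[p] →+* ZMod p)
        = Polynomial.C ((n.factorial / k.factorial : ℕ) : ZMod p) * (-X) ^ k := by
      intro k hk
      rw [Polynomial.map_mul, Polynomial.map_C, map_natCast, Polynomial.map_pow,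
        Polynomial.map_neg, Polynomial.map_X]
    rw [Finset.sum_congr rfl hterm]
    rw [Finset.sum_eq_single n]
    · rw [Nat.div_self (Nat.factorial_pos n), Nat.cast_one, map_one, one_mul]
    · intro k hk hkn
      rw [Finset.mem_range] at hk
      have hklt : k ≤ n - 1 := by omega
      have hdvd : p ∣ n.factorial / k.factorial := by
        obtain ⟨m, rfl⟩ : ∃ m, n = m + 1 := ⟨n - 1, by omega⟩
        have h1 : k.factorial ∣ m.factorial :=
          Nat.factorial_dvd_factorial (by omega)
        have h2 : (m+1).factorial / k.factorial = (m+1) * (m.factorial / k.factorial) := by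
          rw [Nat.factorial_succ, Nat.mul_div_assoc _ h1]
        rw [h2]
        exact Dvd.dvd.mul_right (dvd_trans hpn (dvd_refl _)) _
      have : ((n.factorial / k.factorial : ℕ) : ZMod p) = 0 :=
        (CharP.cast_eq_zero_iff (ZMod p) p _).mpr hdvd
      rw [this, map_zero, zero_mul]
    · intro h
      exact absurd (Finset.mem_range.mpr (by omega)) h
  rw [Polynomial.map_sub, Polynomial.map_mul, Polynomial.map_pow, Polynomial.map_neg,
    Polynomial.map_X, hmap1, Polynomial.map_neg, Polynomial.map_sum]
  have hterm2 : ∀ r ∈ Finset.Icc 1 a,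
      (X ^ (p ^ r) * ∑ k ∈ Finset.range (n + 1),
        Polynomial.C ((n.factorial / k.factorial : ℕ) : ℤ_[p]) * (-X) ^ k).map
        (PadicInt.toZMod : ℤ_[p] →+* ZMod p)
      = X ^ (p ^ r) * (-X) ^ n := by
    intro r hr
    rw [Polynomial.map_mul, Polynomial.map_pow, Polynomial.map_X, hmap2]
  rw [Finset.sum_congr rfl hterm2]
  have hsum : ∑ r ∈ Finset.Icc 1 a, (X : Polynomial (ZMod p)) ^ (p ^ r) * (-X) ^ n
      = (X * Tpoly p a) * (-X) ^ n := by
    rw [← Finset.sum_mul]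
    congr 1
    rw [sum_Icc_one_eq_sum_range (fun r => (X : Polynomial (ZMod p)) ^ (p ^ r)) a]
    rw [Tpoly, Finset.mul_sum]
    refine Finset.sum_congr rfl fun r hr => ?_
    rw [← pow_succ']
    congr 1
    have h2 : 1 ≤ p ^ (r+1) := Nat.one_le_pow _ _ (Fact.out (p := p.Prime)).pos
    omega
  rw [hsum, pow_succ]
  ring
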